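/- For the representation Π of ℂ[SU₂]_q on ℓ²(ℤ₊) given by Π(t₁₁) = S*C_q, Π(t₁₂) = q d(q), Π(t₂₁) = −d(q), Π(t₂₂) = C_q S, the vector e₀ satisfies Π(t₂₂)* e₀ = 0, Π(t₂₁)* e₀ = −e₀, and the vectors Π(t₂₂)^m e₀ (m ∈ ℤ₊) span a dense subspace of ℓ²(ℤ₊); hence Π is a cyclic representation with cyclic vector e₀. -/

import Mathlib

/-- ℓ²(ℤ₊) -/
noncomputable abbrev L2 : Type := lp (fun _ : ℕ => ℂ) 2

/-- standard basis vector e_n -/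
noncomputable def e (n : ℕ) : L2 := lp.single 2 n 1

lemma inner_e (n : ℕ) (f : L2) : (inner ℂ (e n) f : ℂ) = f n := by
  rw [e, lp.inner_single_left]
  simp

lemma e_apply (m j : ℕ) : (e m) j = if j = m then 1 else 0 := by
  rw [e, lp.single_apply]
  exact Pi.single_apply m 1 j

lemma ext_of_inner_e {f g : L2} (h : ∀ n, (inner ℂ (e n) f : ℂ) = inner ℂ (e n) g) : f = g := by
  apply lp.ext
  funext j
  have := h j
  rwa [inner_e, inner_e] at this

noncomputable def stdBasis : HilbertBasis ℕ ℂ L2 :=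
  HilbertBasis.ofRepr (LinearIsometryEquiv.refl ℂ _)

lemma dense_span_e : (Submodule.span ℂ (Set.range e)).topologicalClosure = ⊤ := by
  set b := stdBasis with hbdef
  have hb : ∀ n, b n = e n := fun n => (b.repr_symm_single n).symm.trans rfl
  have := b.dense_span
  have hrange : Set.range (b : ℕ → L2) = Set.range e := by
    ext x; constructor <;> rintro ⟨n, rfl⟩ <;> exact ⟨n, (hb n).symm ▸ rfl⟩
  rwa [hrange] at this

/-- for Π(t₂₂) = C_q S and Π(t₂₁) = −d(q): Π(t₂₂)* e₀ = 0,
Π(t₂₁)* e₀ = −e₀, and the vectors Π(t₂₂)^m e₀ span a dense subspace, so e₀ is a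
cyclic vector for Π. -/
theorem su2_rep_cyclic (q : ℝ) (hq : 0 < q) (hq1 : q < 1)
    (S Cq dq : L2 →L[ℂ] L2)
    (hS : ∀ n : ℕ, S (e n) = e (n + 1))
    (hC : ∀ n : ℕ, Cq (e n) = (Real.sqrt (1 - q ^ (2 * n)) : ℂ) • e n)
    (hd : ∀ n : ℕ, dq (e n) = ((q : ℂ) ^ n) • e n) :
    (ContinuousLinearMap.adjoint (Cq ∘L S)) (e 0) = 0 ∧
    (ContinuousLinearMap.adjoint (-dq)) (e 0) = -(e 0) ∧
    (Submodule.span ℂ (Set.range fun m : ℕ => ((Cq ∘L S) ^ m) (e 0))).topologicalClosure = ⊤ := by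
  refine ⟨?_, ?_, ?_⟩
  · apply ext_of_inner_e
    intro n
    rw [ContinuousLinearMap.adjoint_inner_right]
    simp only [ContinuousLinearMap.comp_apply, hS, hC, inner_smul_left, inner_e, e_apply,
      inner_zero_right]
    simp
  · apply ext_of_inner_e
    intro n
    rw [ContinuousLinearMap.adjoint_inner_right]
    simp only [ContinuousLinearMap.neg_apply, hd, neg_smul, inner_neg_left, inner_smul_left,
      inner_e, inner_neg_right, e_apply]
    rcases n with _ | n
    · simp
    · simp
  · -- key: (Cq ∘L S)^m (e 0) = c • e m with c > 0
    have key : ∀ m : ℕ, ∃ c : ℝ, 0 < c ∧ ((Cq ∘L S) ^ m) (e 0) = (c : ℂ) • e m := by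
      intro m
      induction m with
      | zero => exact ⟨1, one_pos, by simp⟩
      | succ m ih =>
        obtain ⟨c, hc, hcm⟩ := ih
        have hlt : q ^ (2 * (m + 1)) < 1 :=
          pow_lt_one₀ hq.le hq1 (by omega)
        refine ⟨c * Real.sqrt (1 - q ^ (2 * (m + 1))), ?_, ?_⟩
        · exact mul_pos hc (Real.sqrt_pos.mpr (by linarith))
        · rw [pow_succ', ContinuousLinearMap.mul_apply, hcm, map_smul,
            ContinuousLinearMap.comp_apply, hS, hC]
          rw [smul_smul]
          push_cast
          ring_nf
    rw [eq_top_iff, ← dense_span_e]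
    apply Submodule.topologicalClosure_mono
    rw [Submodule.span_le]
    rintro x ⟨m, rfl⟩
    obtain ⟨c, hc, hcm⟩ := key m
    have : e m = ((c : ℂ)⁻¹) • ((Cq ∘L S) ^ m) (e 0) := by
      rw [hcm, smul_smul, inv_mul_cancel₀ (by exact_mod_cast hc.ne'), one_smul]
    rw [this]
    exact Submodule.smul_mem _ _ (Submodule.subset_span ⟨m, rfl⟩)
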